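/- Let (B, L) be a Banach SNL space with Banach SNL dual (B*, L̃), A a norm-closed linear L-positive subspace of B such that the polar subspace A⁰ is L̃-negative. Then for every d ∈ B, with C := A − d, inf_{c ∈ C} [q_L(c) + (1/2)‖c‖²] ≤ 0. -/

import Mathlib

open NormedSpace

noncomputable def qL {B : Type*} [NormedAddCommGroup B] [NormedSpace ℝ B]
    (L : B →L[ℝ] StrongDual ℝ B) (b : B) : ℝ := (1 / 2) * L b b

section SNLaux

variable {B : Type*} [NormedAddCommGroup B] [NormedSpace ℝ B]

/-- the difference-quotient term whose infimum over `t > 0` is the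
`ε`-regularized directional derivative functional. -/
noncomputable def SNLterm (c₀ : B) (ε : ℝ) (h : B) (t : ℝ) : ℝ :=
  (‖c₀ + t • h‖ ^ 2 - ‖c₀‖ ^ 2 + 2 * ε ^ 2 + t ^ 2 * ‖h‖ ^ 2) / (2 * t)

noncomputable def SNLS (c₀ : B) (ε : ℝ) (h : B) : ℝ :=
  ⨅ t : { t : ℝ // 0 < t }, SNLterm c₀ ε h t.1

instance : Nonempty { t : ℝ // 0 < t } := ⟨⟨1, one_pos⟩⟩

lemma SNLterm_lb (c₀ : B) (ε : ℝ) (h : B) {t : ℝ} (ht : 0 < t) :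
    -(‖c₀‖ * ‖h‖) ≤ SNLterm c₀ ε h t := by
  have h1 : ‖c₀‖ ≤ ‖c₀ + t • h‖ + t * ‖h‖ := by
    have := norm_add_le (c₀ + t • h) (-(t • h))
    simpa [norm_smul, abs_of_pos ht] using this
  have h2 : t * ‖h‖ ≤ ‖c₀ + t • h‖ + ‖c₀‖ := by
    have := norm_add_le (c₀ + t • h) (-c₀)
    simpa [norm_smul, abs_of_pos ht] using this
  rw [SNLterm, le_div_iff₀ (by positivity)]
  nlinarith [norm_nonneg (c₀ + t • h), norm_nonneg c₀, norm_nonneg h, sq_nonneg ε,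
    mul_pos ht ht]

lemma SNLS_bddBelow (c₀ : B) (ε : ℝ) (h : B) :
    BddBelow (Set.range fun t : { t : ℝ // 0 < t } => SNLterm c₀ ε h t.1) := by
  refine ⟨-(‖c₀‖ * ‖h‖), ?_⟩
  rintro v ⟨t, rfl⟩
  exact SNLterm_lb c₀ ε h t.2

lemma SNLS_le_term (c₀ : B) (ε : ℝ) (h : B) {t : ℝ} (ht : 0 < t) :
    SNLS c₀ ε h ≤ SNLterm c₀ ε h t :=
  ciInf_le (SNLS_bddBelow c₀ ε h) ⟨t, ht⟩

lemma SNLterm_smul (c₀ : B) (ε : ℝ) (h : B) {c t : ℝ} (hc : 0 < c) (ht : 0 < t) :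
    SNLterm c₀ ε (c • h) t = c * SNLterm c₀ ε h (t * c) := by
  have : t • c • h = (t * c) • h := (smul_smul t c h)
  rw [SNLterm, SNLterm, this, norm_smul]
  rw [Real.norm_eq_abs, abs_of_pos hc]
  field_simp

lemma SNLS_smul (c₀ : B) (ε : ℝ) (h : B) {c : ℝ} (hc : 0 < c) :
    SNLS c₀ ε (c • h) = c * SNLS c₀ ε h := by
  apply le_antisymm
  · rw [← div_le_iff₀' hc]
    refine le_ciInf fun t => ?_
    rw [div_le_iff₀' hc]
    calc SNLS c₀ ε (c • h) ≤ SNLterm c₀ ε (c • h) (t.1 / c) :=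
          SNLS_le_term c₀ ε (c • h) (div_pos t.2 hc)
      _ = c * SNLterm c₀ ε h (t.1 / c * c) := SNLterm_smul c₀ ε h hc (div_pos t.2 hc)
      _ = c * SNLterm c₀ ε h t.1 := by rw [div_mul_cancel₀ _ hc.ne']
  · refine le_ciInf fun t => ?_
    rw [SNLterm_smul c₀ ε h hc t.2]
    exact mul_le_mul_of_nonneg_left (SNLS_le_term c₀ ε h (mul_pos t.2 hc)) hc.le

private lemma div_le_div_of_nonneg_right' {a b c : ℝ} (h : a ≤ b) (hc : 0 < c) :
    a / c ≤ b / c := by gcongr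

lemma SNLterm_add (c₀ : B) (ε : ℝ) (x y : B) {t₁ t₂ : ℝ} (h₁ : 0 < t₁) (h₂ : 0 < t₂) :
    SNLterm c₀ ε (x + y) (t₁ * t₂ / (t₁ + t₂)) ≤ SNLterm c₀ ε x t₁ + SNLterm c₀ ε y t₂ := by
  set l : ℝ := t₂ / (t₁ + t₂) with hl
  set t : ℝ := t₁ * t₂ / (t₁ + t₂) with htdef
  have hsum : 0 < t₁ + t₂ := by linarith
  have ht : 0 < t := by positivity
  have hl0 : 0 < l := by positivity
  have hl1 : l < 1 := by
    rw [hl, div_lt_one hsum]; linarith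
  have hl1' : (0:ℝ) < 1 - l := by linarith
  have hlt₁ : l * t₁ = t := by rw [hl, htdef]; field_simp
  have hlt₂ : (1 - l) * t₂ = t := by
    rw [hl, htdef]; field_simp; ring
  have key1 : c₀ + t • (x + y) = l • (c₀ + t₁ • x) + (1 - l) • (c₀ + t₂ • y) := by
    calc c₀ + t • (x + y)
        = (l + (1 - l)) • c₀ + (l * t₁) • x + ((1 - l) * t₂) • y := by
          rw [hlt₁, hlt₂, show l + (1 - l) = (1:ℝ) by ring, one_smul, smul_add]; abel
      _ = l • (c₀ + t₁ • x) + (1 - l) • (c₀ + t₂ • y) := by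
          simp only [smul_add, smul_smul, add_smul]; abel
  have key2 : t • (x + y) = l • (t₁ • x) + (1 - l) • (t₂ • y) := by
    rw [smul_add, smul_smul, smul_smul, hlt₁, hlt₂]
  have hn1 : ‖c₀ + t • (x + y)‖ ≤ l * ‖c₀ + t₁ • x‖ + (1 - l) * ‖c₀ + t₂ • y‖ := by
    rw [key1]
    refine (norm_add_le _ _).trans ?_
    rw [norm_smul, norm_smul, Real.norm_eq_abs, Real.norm_eq_abs, abs_of_pos hl0,
      abs_of_pos hl1']
  have hn2 : t * ‖x + y‖ ≤ l * (t₁ * ‖x‖) + (1 - l) * (t₂ * ‖y‖) := by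
    have h0 : ‖t • (x + y)‖ = t * ‖x + y‖ := by
      rw [norm_smul, Real.norm_eq_abs, abs_of_pos ht]
    have := norm_add_le (l • (t₁ • x)) ((1 - l) • (t₂ • y))
    rw [← key2, h0] at this
    refine this.trans (le_of_eq ?_)
    rw [norm_smul, norm_smul, norm_smul, norm_smul]
    simp only [Real.norm_eq_abs, abs_of_pos hl0, abs_of_pos hl1', abs_of_pos h₁, abs_of_pos h₂]
  have hq1 : ‖c₀ + t • (x + y)‖ ^ 2 ≤ l * ‖c₀ + t₁ • x‖ ^ 2 + (1 - l) * ‖c₀ + t₂ • y‖ ^ 2 := by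
    nlinarith [norm_nonneg (c₀ + t • (x + y)), norm_nonneg (c₀ + t₁ • x),
      norm_nonneg (c₀ + t₂ • y),
      mul_nonneg (mul_nonneg hl0.le hl1'.le) (sq_nonneg (‖c₀ + t₁ • x‖ - ‖c₀ + t₂ • y‖))]
  have hq2 : t ^ 2 * ‖x + y‖ ^ 2 ≤ l * (t₁ ^ 2 * ‖x‖ ^ 2) + (1 - l) * (t₂ ^ 2 * ‖y‖ ^ 2) := by
    have hA : 0 ≤ t₁ * ‖x‖ := mul_nonneg h₁.le (norm_nonneg x)
    have hB : 0 ≤ t₂ * ‖y‖ := mul_nonneg h₂.le (norm_nonneg y)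
    have hTM : 0 ≤ t * ‖x + y‖ := mul_nonneg ht.le (norm_nonneg _)
    have hsq := mul_self_le_mul_self hTM hn2
    nlinarith [hsq, mul_nonneg (mul_nonneg hl0.le hl1'.le) (sq_nonneg (t₁ * ‖x‖ - t₂ * ‖y‖))]
  have keynum : ‖c₀ + t • (x + y)‖ ^ 2 - ‖c₀‖ ^ 2 + 2 * ε ^ 2 + t ^ 2 * ‖x + y‖ ^ 2 ≤
      l * (‖c₀ + t₁ • x‖ ^ 2 - ‖c₀‖ ^ 2 + 2 * ε ^ 2 + t₁ ^ 2 * ‖x‖ ^ 2) +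
      (1 - l) * (‖c₀ + t₂ • y‖ ^ 2 - ‖c₀‖ ^ 2 + 2 * ε ^ 2 + t₂ ^ 2 * ‖y‖ ^ 2) := by
    nlinarith [hq1, hq2]
  have gen : ∀ N₁ N₂ : ℝ, (l * N₁ + (1 - l) * N₂) / (2 * t) = N₁ / (2 * t₁) + N₂ / (2 * t₂) := by
    intro N₁ N₂
    rw [hl, htdef]
    field_simp
    ring
  calc SNLterm c₀ ε (x + y) t
      ≤ (l * (‖c₀ + t₁ • x‖ ^ 2 - ‖c₀‖ ^ 2 + 2 * ε ^ 2 + t₁ ^ 2 * ‖x‖ ^ 2) +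
          (1 - l) * (‖c₀ + t₂ • y‖ ^ 2 - ‖c₀‖ ^ 2 + 2 * ε ^ 2 + t₂ ^ 2 * ‖y‖ ^ 2)) / (2 * t) := by
        rw [SNLterm]
        exact div_le_div_of_nonneg_right' keynum (by linarith)
    _ = _ := gen _ _

lemma SNLS_add (c₀ : B) (ε : ℝ) (x y : B) :
    SNLS c₀ ε (x + y) ≤ SNLS c₀ ε x + SNLS c₀ ε y := by
  have H : ∀ t₁ : { t : ℝ // 0 < t }, ∀ t₂ : { t : ℝ // 0 < t },
      SNLS c₀ ε (x + y) ≤ SNLterm c₀ ε x t₁.1 + SNLterm c₀ ε y t₂.1 := by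
    intro t₁ t₂
    calc SNLS c₀ ε (x + y) ≤ SNLterm c₀ ε (x + y) (t₁.1 * t₂.1 / (t₁.1 + t₂.1)) :=
          SNLS_le_term c₀ ε (x + y) (by have h1 := t₁.2; have h2 := t₂.2; positivity)
      _ ≤ _ := SNLterm_add c₀ ε x y t₁.2 t₂.2
  have H1 : ∀ t₂ : { t : ℝ // 0 < t },
      SNLS c₀ ε (x + y) - SNLterm c₀ ε y t₂.1 ≤ SNLS c₀ ε x := by
    intro t₂
    refine le_ciInf fun t₁ => ?_
    linarith [H t₁ t₂]
  have H2 : ∀ t₂ : { t : ℝ // 0 < t },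
      SNLS c₀ ε (x + y) - SNLS c₀ ε x ≤ SNLterm c₀ ε y t₂.1 := by
    intro t₂; linarith [H1 t₂]
  have h3 : SNLS c₀ ε (x + y) - SNLS c₀ ε x ≤ SNLS c₀ ε y := le_ciInf H2
  linarith

lemma SNLS_le_norm (c₀ : B) {ε : ℝ} (hε : 0 < ε) (h : B) :
    SNLS c₀ ε h ≤ (‖c₀‖ + 2 * ε) * ‖h‖ := by
  rcases eq_or_ne h 0 with rfl | hh
  · have hterm : ∀ t : ℝ, 0 < t → SNLterm c₀ ε (0 : B) t = ε ^ 2 / t := by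
      intro t ht
      rw [SNLterm]
      simp only [smul_zero, add_zero, norm_zero]
      have htne : t ≠ 0 := ht.ne'
      field_simp
      ring
    have hS0 : SNLS c₀ ε (0 : B) ≤ 0 := by
      by_contra hpos
      push_neg at hpos
      have ht : 0 < ε ^ 2 / (SNLS c₀ ε (0:B) / 2) := by positivity
      have := SNLS_le_term c₀ ε (0 : B) ht
      have heq : ε ^ 2 / (ε ^ 2 / (SNLS c₀ ε (0:B) / 2)) = SNLS c₀ ε (0:B) / 2 := by
        rw [div_div_eq_mul_div, mul_div_cancel_left₀ _ (by positivity : (ε:ℝ) ^ 2 ≠ 0)]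
      rw [hterm _ ht, heq] at this
      linarith
    simpa using hS0.trans (by positivity)
  · have hh0 : 0 < ‖h‖ := norm_pos_iff.mpr hh
    have ht : 0 < ε / ‖h‖ := by positivity
    refine (SNLS_le_term c₀ ε h ht).trans ?_
    rw [SNLterm, div_le_iff₀ (by positivity)]
    have hb : ‖c₀ + (ε / ‖h‖) • h‖ ≤ ‖c₀‖ + ε := by
      refine (norm_add_le _ _).trans ?_
      rw [norm_smul, Real.norm_eq_abs, abs_of_pos ht, div_mul_cancel₀ _ hh0.ne']
    have hb2 : ‖c₀ + (ε / ‖h‖) • h‖ ^ 2 ≤ (‖c₀‖ + ε) ^ 2 := by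
      nlinarith [norm_nonneg (c₀ + (ε / ‖h‖) • h), norm_nonneg c₀, hε]
    have he : (ε / ‖h‖) ^ 2 * ‖h‖ ^ 2 = ε ^ 2 := by field_simp
    rw [he]
    have : (‖c₀‖ + 2 * ε) * ‖h‖ * (2 * (ε / ‖h‖)) = 2 * ε * ‖c₀‖ + 4 * ε ^ 2 := by
      field_simp; ring
    rw [this]
    nlinarith [norm_nonneg c₀]

lemma SNLS_neg_self (c₀ : B) {ε : ℝ} (hε : 0 < ε) :
    SNLS c₀ ε (-c₀) ≤ -‖c₀‖ ^ 2 + 2 * ε * ‖c₀‖ + ε := by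
  set t : ℝ := ε / (‖c₀‖ + 1) with htdef
  have hden : (0:ℝ) < ‖c₀‖ + 1 := by positivity
  have ht : 0 < t := by positivity
  refine (SNLS_le_term c₀ ε (-c₀) ht).trans ?_
  have key : c₀ + t • (-c₀) = (1 - t) • c₀ := by
    rw [smul_neg, sub_smul, one_smul, sub_eq_add_neg]
  rw [SNLterm, key, norm_smul, Real.norm_eq_abs, norm_neg]
  rw [div_le_iff₀ (by positivity)]
  have habs : |1 - t| ^ 2 = (1 - t) ^ 2 := sq_abs _
  rw [mul_pow, habs]
  have hteq : t * (‖c₀‖ + 1) = ε := by rw [htdef]; field_simp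
  have htle : t * ‖c₀‖ ≤ ε := by nlinarith [ht]
  nlinarith [norm_nonneg c₀, sq_nonneg (1 - t), ht, hteq, htle,
    mul_nonneg ht.le (norm_nonneg c₀), sq_nonneg t, sq_nonneg (t * ‖c₀‖)]

end SNLaux

lemma qL_abs_le {B : Type*} [NormedAddCommGroup B] [NormedSpace ℝ B]
    (L : B →L[ℝ] StrongDual ℝ B) (hL : ‖L‖ ≤ 1) (b : B) : |qL L b| ≤ (1 / 2) * ‖b‖ ^ 2 := by
  have h1 : ‖(L b) b‖ ≤ ‖L b‖ * ‖b‖ := (L b).le_opNorm b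
  have h2 : ‖L b‖ ≤ ‖L‖ * ‖b‖ := L.le_opNorm b
  rw [Real.norm_eq_abs] at h1
  have h3 : |(L b) b| ≤ ‖b‖ * ‖b‖ := by
    nlinarith [norm_nonneg (L b), norm_nonneg b, norm_nonneg L]
  rw [qL, abs_mul, abs_of_pos (by norm_num : (0:ℝ) < 1/2)]
  nlinarith [h3]

set_option maxHeartbeats 1000000 in
theorem stmt12 {B : Type*} [NormedAddCommGroup B] [NormedSpace ℝ B] [CompleteSpace B]
    [Nontrivial B]
    (L : B →L[ℝ] StrongDual ℝ B) (hL : ‖L‖ ≤ 1)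
    (hsym : ∀ b c : B, L c b = L b c)
    (Lt : StrongDual ℝ B →L[ℝ] StrongDual ℝ (StrongDual ℝ B)) (hLt : @Norm.norm _ (ContinuousLinearMap.hasOpNorm (𝕜 := ℝ) (𝕜₂ := ℝ) (σ₁₂ := RingHom.id ℝ)
      (E := StrongDual ℝ B) (F := StrongDual ℝ (StrongDual ℝ B))) Lt ≤ 1)
    (hsymt : ∀ p q : StrongDual ℝ B, Lt q p = Lt p q)
    (hdual : ∀ b : B, Lt (L b) = inclusionInDoubleDual ℝ B b)
    (A : Subspace ℝ B) (hclosed : IsClosed (A : Set B))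
    (hpos : ∀ a ∈ A, 0 ≤ qL L a)
    (hneg : ∀ b' : StrongDual ℝ B, (∀ a ∈ A, b' a = 0) → qL Lt b' ≤ 0) :
    -- with `C := A − d`, `inf_{c ∈ C} [q_L(c) + (1/2)‖c‖²] ≤ 0`
    ∀ d : B, ⨅ a : A, (qL L ((a : B) - d) + (1 / 2) * ‖(a : B) - d‖ ^ 2) ≤ 0 := by
  intro d
  by_contra hk0
  push_neg at hk0
  haveI : Nonempty A := ⟨0⟩
  set F : A → ℝ := fun a => qL L ((a : B) - d) + (1 / 2) * ‖(a : B) - d‖ ^ 2 with hFdef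
  set k : ℝ := ⨅ a : A, F a with hkdef
  have hF0 : ∀ a : A, (0:ℝ) ≤ F a := by
    intro a
    have := qL_abs_le L hL ((a : B) - d)
    rw [abs_le] at this
    simp only [hFdef]
    linarith [this.1]
  have hbdd : BddBelow (Set.range F) := ⟨0, by rintro v ⟨a, rfl⟩; exact hF0 a⟩
  have hkle : ∀ a : A, k ≤ F a := fun a => ciInf_le hbdd a
  have hknn : 0 < k := hk0
  -- expansion of qL along a line
  have qexp : ∀ b c : B, qL L (b + c) = qL L b + L b c + qL L c := by
    intro b c
    simp only [qL, map_add, ContinuousLinearMap.add_apply]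
    rw [hsym b c]
    ring
  set R : ℝ := ‖d‖ + Real.sqrt (2 * k + 2 + 4 * ‖d‖ ^ 2) with hRdef
  have hR0 : 0 ≤ R := by positivity
  have key : ∀ ε : ℝ, 0 < ε → ε ≤ 1 → k ≤ ε * (4 * R + 3) := by
    intro ε hε hε1
    obtain ⟨a₀, ha₀⟩ := exists_lt_of_ciInf_lt (show ⨅ a : A, F a < k + ε ^ 2 by
      rw [← hkdef]; nlinarith)
    set c₀ : B := (a₀ : B) - d with hc₀def
    have hFa₀ : F a₀ = qL L c₀ + (1 / 2) * ‖c₀‖ ^ 2 := rfl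
    -- norm bound on c₀
    have hnorm : ‖c₀‖ ≤ R := by
      have e1 : qL L c₀ = qL L (a₀ : B) + L (a₀ : B) (-d) + qL L (-d) := by
        rw [hc₀def, sub_eq_add_neg]; exact qexp _ _
      have e2 : qL L (-d) = qL L d := by simp [qL]
      have h3 : ‖L (a₀ : B) (-d)‖ ≤ ‖(a₀ : B)‖ * ‖d‖ := by
        calc ‖L (a₀ : B) (-d)‖ ≤ ‖L (a₀ : B)‖ * ‖-d‖ := (L _).le_opNorm _
          _ ≤ ‖L‖ * ‖(a₀ : B)‖ * ‖-d‖ := by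
              gcongr; exact L.le_opNorm _
          _ ≤ ‖(a₀ : B)‖ * ‖d‖ := by
              rw [norm_neg]
              have hm := mul_le_mul_of_nonneg_right hL
                (mul_nonneg (norm_nonneg (a₀ : B)) (norm_nonneg d))
              nlinarith [hm]
      rw [Real.norm_eq_abs, abs_le] at h3
      have h4 : ‖(a₀ : B)‖ ≤ ‖c₀‖ + ‖d‖ := by
        have : (a₀ : B) = c₀ + d := by rw [hc₀def]; abel
        rw [this]; exact norm_add_le _ _
      have h5 := hpos (a₀ : B) a₀.2
      have h6 := qL_abs_le L hL d
      rw [abs_le] at h6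
      have h7 : F a₀ < k + 1 := by nlinarith [ha₀]
      have h8 : (‖c₀‖ - ‖d‖) ^ 2 ≤ 2 * k + 2 + 4 * ‖d‖ ^ 2 := by
        rw [hFa₀] at h7
        nlinarith [norm_nonneg c₀, norm_nonneg d, e1, e2, h3.1, h4, h5, h6.1]
      have h9 : ‖c₀‖ - ‖d‖ ≤ Real.sqrt (2 * k + 2 + 4 * ‖d‖ ^ 2) := by
        have hs := Real.sqrt_le_sqrt h8
        rw [Real.sqrt_sq_eq_abs] at hs
        linarith [le_abs_self (‖c₀‖ - ‖d‖)]
      rw [hRdef]; linarith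
    -- gradient inequality
    have grad : ∀ h : B, h ∈ A → -(L c₀ h) ≤ SNLS c₀ ε h := by
      intro h hh
      refine le_ciInf fun tp => ?_
      obtain ⟨t, ht⟩ := tp
      have hk' := hkle (a₀ + t • (⟨h, hh⟩ : A))
      have hcoe : ((a₀ + t • (⟨h, hh⟩ : A) : A) : B) - d = c₀ + t • h := by
        push_cast [Submodule.coe_add, SetLike.val_smul]
        rw [hc₀def]; abel
      have hFval : F (a₀ + t • (⟨h, hh⟩ : A)) =
          qL L (c₀ + t • h) + (1 / 2) * ‖c₀ + t • h‖ ^ 2 := by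
        simp only [hFdef, hcoe]
      rw [hFval] at hk'
      have hq : qL L (c₀ + t • h) = qL L c₀ + t * (L c₀ h) + t ^ 2 * qL L h := by
        rw [qexp c₀ (t • h)]
        have e1 : L c₀ (t • h) = t * (L c₀ h) := by
          rw [(L c₀).map_smul, smul_eq_mul]
        have e2 : qL L (t • h) = t ^ 2 * qL L h := by
          rw [qL, qL, L.map_smul, ContinuousLinearMap.smul_apply, (L h).map_smul,
            smul_eq_mul, smul_eq_mul]
          ring
        rw [e1, e2]
      rw [hq] at hk'
      have hqh := qL_abs_le L hL h
      rw [abs_le] at hqh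
      rw [hFa₀] at ha₀
      have hmul := mul_le_mul_of_nonneg_left hqh.2 (by positivity : (0:ℝ) ≤ 2 * t ^ 2)
      show -(L c₀ h) ≤ SNLterm c₀ ε h t
      rw [SNLterm, le_div_iff₀ (by positivity)]
      linarith [hk', ha₀, hmul]
    -- Hahn-Banach extension
    set f : B →ₗ.[ℝ] ℝ :=
      ⟨A, ((-(L c₀) : B →L[ℝ] ℝ) : B →ₗ[ℝ] ℝ).comp A.subtype⟩ with hfdef
    have hf : ∀ x : f.domain, f x ≤ SNLS c₀ ε x := fun x => grad x.1 x.2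
    obtain ⟨g, hg_eq, hg_le⟩ := exists_extension_of_le_sublinear f (SNLS c₀ ε)
      (fun c hc x => SNLS_smul c₀ ε x hc) (SNLS_add c₀ ε) hf
    have hgb : ∀ x : B, |g x| ≤ (‖c₀‖ + 2 * ε) * ‖x‖ := by
      intro x
      have h1 := (hg_le x).trans (SNLS_le_norm c₀ hε x)
      have h2 := (hg_le (-x)).trans (SNLS_le_norm c₀ hε (-x))
      rw [map_neg, norm_neg] at h2
      exact abs_le.mpr ⟨by linarith, h1⟩
    set φ : B →L[ℝ] ℝ := g.mkContinuous (‖c₀‖ + 2 * ε)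
      (fun x => by rw [Real.norm_eq_abs]; exact hgb x) with hφdef
    have hφapp : ∀ x : B, φ x = g x := fun x => rfl
    have hφnorm : ‖φ‖ ≤ ‖c₀‖ + 2 * ε :=
      g.mkContinuous_norm_le (by positivity) _
    set bs : StrongDual ℝ B := L c₀ + φ with hbsdef
    have hbsA : ∀ a ∈ A, bs a = 0 := by
      intro a ha
      have h1 : g a = -(L c₀ a) := hg_eq ⟨a, ha⟩
      have : bs a = L c₀ a + φ a := rfl
      rw [this, hφapp, h1]; ring
    have hqneg := hneg bs hbsA
    have hexp : Lt bs bs = (L c₀) c₀ + 2 * φ c₀ + Lt φ φ := by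
      have h1 : Lt bs bs = Lt (L c₀) (L c₀) + Lt (L c₀) φ + (Lt φ (L c₀) + Lt φ φ) := by
        rw [hbsdef]
        rw [show Lt (L c₀ + φ) = Lt (L c₀) + Lt φ from map_add Lt _ _]
        rw [ContinuousLinearMap.add_apply, map_add, map_add]
      rw [h1, hsymt (L c₀) φ, hdual c₀, dual_def, dual_def]
      ring
    have hφc₀ : ‖c₀‖ ^ 2 - 2 * ε * ‖c₀‖ - ε ≤ φ c₀ := by
      have h1 := (hg_le (-c₀)).trans (SNLS_neg_self c₀ hε)
      rw [map_neg] at h1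
      rw [hφapp]
      linarith
    have hLtφφ : -((‖c₀‖ + 2 * ε) ^ 2) ≤ Lt φ φ := by
      have h1 : ‖(Lt φ) φ‖ ≤ ‖Lt φ‖ * ‖φ‖ := (Lt φ).le_opNorm φ
      have h2 := ContinuousLinearMap.le_opNorm (𝕜 := ℝ) (𝕜₂ := ℝ) (σ₁₂ := RingHom.id ℝ)
        (E := StrongDual ℝ B) (F := StrongDual ℝ (StrongDual ℝ B)) Lt φ
      rw [Real.norm_eq_abs, abs_le] at h1
      have hφ0 : 0 ≤ ‖φ‖ := norm_nonneg φ
      nlinarith [h1.1, mul_le_mul_of_nonneg_right h2 hφ0,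
        mul_le_mul_of_nonneg_right hLt (mul_nonneg hφ0 hφ0),
        mul_self_le_mul_self hφ0 hφnorm, hε.le, norm_nonneg c₀]
    -- combine
    have hq2 : (L c₀) c₀ = 2 * qL L c₀ := by rw [qL]; ring
    have hfin : (1 / 2) * (Lt bs bs) ≤ 0 := hqneg
    rw [hexp, hq2] at hfin
    have hka₀ := hkle a₀
    rw [hFa₀] at hka₀
    nlinarith [hfin, hφc₀, hLtφφ, hka₀, hnorm, hε, hε1, hR0, norm_nonneg c₀,
      mul_le_mul_of_nonneg_left hnorm hε.le]
  -- conclude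
  have hden : (0:ℝ) < 4 * R + 4 := by linarith
  set ε₀ : ℝ := min 1 (k / (4 * R + 4)) with hε₀def
  have hε₀pos : 0 < ε₀ := lt_min one_pos (div_pos hknn hden)
  have hε₀1 : ε₀ ≤ 1 := min_le_left _ _
  have h1 := key ε₀ hε₀pos hε₀1
  have h2 : ε₀ ≤ k / (4 * R + 4) := min_le_right _ _
  rw [le_div_iff₀ hden] at h2
  nlinarith [h1, h2, hε₀pos, hR0]
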